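/- If a finite simple graph G has a perfect matching, then the containability number of G is at most the number of vertices of G, i.e., ξ(G) ≤ n. -/
import Mathlib


open SimpleGraph

universe u
variable {V : Type u}

/-- Cop strategy in the Containment game: cops occupy edges, move to adjacent edges or pass. -/
structure ContCopStrat (G : SimpleGraph V) (k : ℕ) where
  init : Fin k → Sym2 V
  init_mem : ∀ i, init i ∈ G.edgeSet
  move : (Fin k → Sym2 V) → V → (Fin k → Sym2 V)
  move_mem : ∀ c r i, move c r i ∈ G.edgeSet
  move_adj : ∀ c r i, move c r i = c i ∨ ∃ x : V, x ∈ c i ∧ x ∈ move c r i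

/-- Robber strategy in the Containment game: the robber occupies vertices, may pass or move
along an edge not occupied by a cop. -/
structure ContRobStrat (G : SimpleGraph V) (k : ℕ) where
  init : (Fin k → Sym2 V) → V
  move : (Fin k → Sym2 V) → V → V
  move_ok : ∀ c v, move c v = v ∨
    (G.Adj v (move c v) ∧ ∀ i, c i ≠ s(v, move c v))

/-- The play: cops place first, the robber responds; each round cops move, then the robber. -/
def contPlay {G : SimpleGraph V} {k : ℕ} (S : ContCopStrat G k) (R : ContRobStrat G k) :
    ℕ → (Fin k → Sym2 V) × V
  | 0 => (S.init, R.init S.init)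
  | n + 1 =>
    let p := contPlay S R n
    let c' := S.move p.1 p.2
    (c', R.move c' p.2)

/-- The robber at `v` is contained: every incident edge is occupied by a cop. -/
def Contained {k : ℕ} (G : SimpleGraph V) (c : Fin k → Sym2 V) (v : V) : Prop :=
  ∀ w, G.Adj v w → ∃ i, c i = s(v, w)

/-- `k` cops have a winning strategy in the Containment game on `G`. -/
def ContCopsWin (G : SimpleGraph V) (k : ℕ) : Prop :=
  ∃ S : ContCopStrat G k, ∀ R : ContRobStrat G k, ∃ n,
    Contained G (contPlay S R n).1 (contPlay S R n).2 ∨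
    Contained G (S.move (contPlay S R n).1 (contPlay S R n).2) (contPlay S R n).2

/-- The containability number ξ(G). -/
noncomputable def containNum (G : SimpleGraph V) : ℕ := sInf {k | ContCopsWin G k}

/-- If a finite simple graph `G` has a perfect matching, then ξ(G) ≤ n. -/
theorem containNum_le_card_of_perfectMatching {V : Type u} [Fintype V]
    (G : SimpleGraph V) (M : G.Subgraph) (hM : M.IsPerfectMatching) :
    containNum G ≤ Fintype.card V := by
  classical
  apply Nat.sInf_le
  obtain ⟨e⟩ : Nonempty (Fin (Fintype.card V) ≃ V) :=
    ⟨(Fintype.equivFin V).symm⟩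
  have hmatch : ∀ v : V, ∃ w, M.Adj v w := fun v =>
    ((hM.1 (hM.2 v)).exists)
  let m : V → V := fun v => (hmatch v).choose
  have hm : ∀ v, G.Adj v (m v) := fun v => M.adj_sub (hmatch v).choose_spec
  have hhome : ∀ v : V, s(v, m v) ∈ G.edgeSet := fun v => (hm v)
  let mov : (Fin (Fintype.card V) → Sym2 V) → V → (Fin (Fintype.card V) → Sym2 V) :=
    fun c r i => if G.Adj r (e i) ∧ e i ∈ c i then s(r, e i)
      else s((c i).out.1, m ((c i).out.1))
  have hmem : ∀ c r i, mov c r i ∈ G.edgeSet := by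
    intro c r i
    by_cases h : G.Adj r (e i) ∧ e i ∈ c i
    · simp only [mov, if_pos h]; exact h.1
    · simp only [mov, if_neg h]; exact hhome _
  have hadj : ∀ c r i, mov c r i = c i ∨ ∃ x : V, x ∈ c i ∧ x ∈ mov c r i := by
    intro c r i
    by_cases h : G.Adj r (e i) ∧ e i ∈ c i
    · refine Or.inr ⟨e i, h.2, ?_⟩
      simp [mov, if_pos h]
    · refine Or.inr ⟨(c i).out.1, Sym2.out_fst_mem _, ?_⟩
      simp [mov, if_neg h]
  let S : ContCopStrat G (Fintype.card V) :=
    ⟨fun i => s(e i, m (e i)), fun i => hhome _, mov, hmem, hadj⟩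
  refine ⟨S, fun R => ⟨0, Or.inr ?_⟩⟩
  intro w hw
  refine ⟨e.symm w, ?_⟩
  have h1 : e (e.symm w) = w := e.apply_symm_apply w
  have hcond : G.Adj (contPlay S R 0).2 (e (e.symm w)) ∧
      e (e.symm w) ∈ (contPlay S R 0).1 (e.symm w) := by
    constructor
    · rw [h1]; exact hw
    · show e (e.symm w) ∈ s(e (e.symm w), m (e (e.symm w)))
      simp
  show mov (contPlay S R 0).1 (contPlay S R 0).2 (e.symm w) = _
  simp only [mov, if_pos hcond, h1]
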